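/- Let K ≥ 1 and n ≥ 2 be integers and L = ⌈log₂(4n)⌉. Suppose nonnegative reals w_1,...,w_n, s_1,...,s_n, r_1,...,r_n satisfy: s_i ≤ w_i for all i, r_i = s_i + ∑_{j≠i} w_j for all i, and let W = ∑_i w_i, S = ∑_i s_i. Define A = {0, 2^{-L}, ..., 1/2, 1, 2, ..., 2^K} and REV(α) = ∑_i 1[w_i ≥ s_i + α·r_i]·(s_i + α·r_i). Then (1/2)·REV(2^{K+1}) + (1/(2(K+L+1)))·∑_{α∈A} REV(α) ≥ min{W/(8(K+L+1)), 2^K·S}. -/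

import Mathlib

theorem stmt16 (n K L : ℕ) (hn : 2 ≤ n) (hK : 1 ≤ K)
    (hL : L = ⌈Real.logb 2 (4 * n)⌉₊)
    (w s r : Fin n → ℝ) (hw0 : ∀ i, 0 ≤ w i) (hs0 : ∀ i, 0 ≤ s i)
    (hr0 : ∀ i, 0 ≤ r i) (hsw : ∀ i, s i ≤ w i)
    (hr : ∀ i, r i = s i + ∑ j ∈ Finset.univ.erase i, w j)
    (W S : ℝ) (hW : W = ∑ i, w i) (hS : S = ∑ i, s i)
    (A : Finset ℝ)
    (hA : A = insert 0 (((Finset.Icc 1 L).image fun j => ((2:ℝ)⁻¹) ^ j) ∪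
      ((Finset.range (K + 1)).image fun k => (2:ℝ) ^ k)))
    (REV : ℝ → ℝ)
    (hREV : ∀ α, REV α = ∑ i, if s i + α * r i ≤ w i then s i + α * r i else 0) :
    min (W / (8 * ((K : ℝ) + L + 1))) ((2:ℝ) ^ K * S) ≤
      (1 / 2) * REV ((2:ℝ) ^ (K + 1)) + (1 / (2 * ((K : ℝ) + L + 1))) * ∑ α ∈ A, REV α := by
  classical
  have hM : (0:ℝ) < (K : ℝ) + L + 1 := by positivity
  have hW0 : 0 ≤ W := by rw [hW]; exact Finset.sum_nonneg fun i _ => hw0 i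
  have hS0 : 0 ≤ S := by rw [hS]; exact Finset.sum_nonneg fun i _ => hs0 i
  have hriW : ∀ i, r i ≤ W := by
    intro i
    rw [hr i, hW, ← Finset.add_sum_erase _ w (Finset.mem_univ i)]
    exact add_le_add_left (hsw i) _
  have hSri : ∀ i, S ≤ r i := by
    intro i
    rw [hr i, hS, ← Finset.add_sum_erase _ s (Finset.mem_univ i)]
    exact add_le_add_right (Finset.sum_le_sum fun j _ => hsw j) _
  have hA_nonneg : ∀ α ∈ A, 0 ≤ α := by
    intro α hα
    rw [hA] at hα
    rcases Finset.mem_insert.1 hα with h | h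
    · simp [h]
    · rcases Finset.mem_union.1 h with h | h <;>
      · obtain ⟨j, _, rfl⟩ := Finset.mem_image.1 h
        positivity
  have hzeroA : (0:ℝ) ∈ A := by rw [hA]; exact Finset.mem_insert_self _ _
  have hterm_nonneg : ∀ (i : Fin n) (α : ℝ), 0 ≤ α →
      0 ≤ (if s i + α * r i ≤ w i then s i + α * r i else 0) := by
    intro i α hα
    split
    · have h1 := hs0 i; have h2 := hr0 i; positivity
    · exact le_rfl
  have hREV_nonneg : ∀ α, 0 ≤ α → 0 ≤ REV α := by
    intro α hα
    rw [hREV]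
    exact Finset.sum_nonneg fun i _ => hterm_nonneg i α hα
  have hREV0 : REV 0 = S := by
    rw [hREV, hS]
    refine Finset.sum_congr rfl fun i _ => ?_
    rw [zero_mul, add_zero, if_pos (hsw i)]
  have hsumA_nonneg : 0 ≤ ∑ α ∈ A, REV α :=
    Finset.sum_nonneg fun α hα => hREV_nonneg α (hA_nonneg α hα)
  have hREVtop : 0 ≤ REV (2 ^ (K + 1)) := hREV_nonneg _ (by positivity)
  have hsumA_ge : S ≤ ∑ α ∈ A, REV α := by
    rw [← hREV0]
    exact Finset.single_le_sum (fun α hα => hREV_nonneg α (hA_nonneg α hα)) hzeroA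
  rcases le_or_gt (W / 4) S with hcase | hcase
  · -- S ≥ W/4 : use REV 0 = S
    have h1 : min (W / (8 * ((K : ℝ) + L + 1))) ((2:ℝ) ^ K * S) ≤ W / (8 * ((K : ℝ) + L + 1)) :=
      min_le_left _ _
    have h2 : W / (8 * ((K : ℝ) + L + 1)) ≤ (1 / (2 * ((K : ℝ) + L + 1))) * S := by
      rw [div_le_iff₀ (by positivity)]
      have : (1 / (2 * ((K : ℝ) + L + 1))) * S * (8 * ((K : ℝ) + L + 1))
          = 4 * S := by field_simp; ring
      rw [this]; linarith
    have h3 : (1 / (2 * ((K : ℝ) + L + 1))) * S ≤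
        (1 / (2 * ((K : ℝ) + L + 1))) * ∑ α ∈ A, REV α := by
      apply mul_le_mul_of_nonneg_left hsumA_ge (by positivity)
    linarith
  · by_cases hdom : ∃ i, s i + 2 ^ (K + 1) * r i ≤ w i
    · obtain ⟨i, hi⟩ := hdom
      have h1 : (2:ℝ) ^ (K + 1) * S ≤ REV (2 ^ (K + 1)) := by
        rw [hREV]
        have hle : (2:ℝ) ^ (K + 1) * S ≤
            (if s i + 2 ^ (K + 1) * r i ≤ w i then s i + 2 ^ (K + 1) * r i else 0) := by
          rw [if_pos hi]
          have := hSri i; have := hs0 i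
          nlinarith [pow_pos (two_pos (α := ℝ)) (K + 1)]
        exact hle.trans (Finset.single_le_sum
          (fun j _ => hterm_nonneg j _ (by positivity)) (Finset.mem_univ i))
      have h2 : min (W / (8 * ((K : ℝ) + L + 1))) ((2:ℝ) ^ K * S) ≤ (2:ℝ) ^ K * S :=
        min_le_right _ _
      have h3 : (2:ℝ) ^ K * S ≤ (1 / 2) * REV (2 ^ (K + 1)) := by
        calc (2:ℝ) ^ K * S = (1 / 2) * ((2:ℝ) ^ (K + 1) * S) := by ring
          _ ≤ (1 / 2) * REV (2 ^ (K + 1)) := by linarith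
      have h4 : 0 ≤ (1 / (2 * ((K : ℝ) + L + 1))) * ∑ α ∈ A, REV α := by positivity
      linarith
    · push_neg at hdom
      have hWpos : 0 < W := by linarith
      have hn' : (2:ℝ) ≤ n := by exact_mod_cast hn
      have hnpos : (0:ℝ) < 4 * n := by linarith
      have h2L : (4:ℝ) * n ≤ 2 ^ L := by
        have hle : Real.logb 2 (4 * n) ≤ (L : ℝ) := by rw [hL]; exact Nat.le_ceil _
        calc (4:ℝ) * n = 2 ^ (Real.logb 2 (4 * n)) :=
              (Real.rpow_logb two_pos (by norm_num) hnpos).symm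
          _ ≤ 2 ^ (L : ℝ) := Real.rpow_le_rpow_of_exponent_le (by norm_num) hle
          _ = 2 ^ L := by rw [Real.rpow_natCast]
      set ε : ℝ := (2:ℝ) ^ (-(L:ℤ)) with hεdef
      have hε0 : 0 < ε := by positivity
      have hε : ε ≤ 1 / (4 * n) := by
        rw [hεdef, zpow_neg, zpow_natCast, one_div]
        exact inv_anti₀ hnpos h2L
      set G : Finset (Fin n) := Finset.univ.filter (fun i => s i + ε * r i ≤ w i) with hGdef
      have hGsum : W / 2 < ∑ i ∈ G, w i := by
        have hsplit : ∑ i ∈ G, w i + ∑ i ∈ Finset.univ.filter (fun i => ¬ (s i + ε * r i ≤ w i)), w i = W := by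
          rw [hW, hGdef]; exact Finset.sum_filter_add_sum_filter_not _ _ _
        have hbad : ∑ i ∈ Finset.univ.filter (fun i => ¬ (s i + ε * r i ≤ w i)), w i
            ≤ S + W / 4 := by
          have step1 : ∑ i ∈ Finset.univ.filter (fun i => ¬ (s i + ε * r i ≤ w i)), w i
              ≤ ∑ i ∈ Finset.univ.filter (fun i => ¬ (s i + ε * r i ≤ w i)), (s i + ε * W) := by
            refine Finset.sum_le_sum fun i hi => ?_
            have hi' := (Finset.mem_filter.1 hi).2
            push_neg at hi'
            have : ε * r i ≤ ε * W := mul_le_mul_of_nonneg_left (hriW i) hε0.le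
            linarith
          have step2 : ∑ i ∈ Finset.univ.filter (fun i => ¬ (s i + ε * r i ≤ w i)), (s i + ε * W)
              ≤ S + W / 4 := by
            rw [Finset.sum_add_distrib, Finset.sum_const, nsmul_eq_mul]
            have c1 : ∑ i ∈ Finset.univ.filter (fun i => ¬ (s i + ε * r i ≤ w i)), s i ≤ S := by
              rw [hS]
              exact Finset.sum_le_sum_of_subset_of_nonneg (Finset.filter_subset _ _)
                (fun i _ _ => hs0 i)
            have c2 : ((Finset.univ.filter (fun i => ¬ (s i + ε * r i ≤ w i))).card : ℝ) * (ε * W)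
                ≤ W / 4 := by
              have hcard' : (Finset.univ.filter (fun i => ¬ (s i + ε * r i ≤ w i))).card ≤ n :=
                le_trans (Finset.card_filter_le _ _) (by simp)
              have hcard : ((Finset.univ.filter (fun i => ¬ (s i + ε * r i ≤ w i))).card : ℝ) ≤ n := by
                exact_mod_cast hcard'
              have hεW : ε * W ≤ W / (4 * n) := by
                rw [div_eq_mul_inv, ← one_div]
                calc ε * W ≤ (1 / (4 * n)) * W := mul_le_mul_of_nonneg_right hε hW0
                  _ = W * (1 / (4 * n)) := by ring
              have h0 : 0 ≤ ε * W := by positivity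
              calc ((Finset.univ.filter (fun i => ¬ (s i + ε * r i ≤ w i))).card : ℝ) * (ε * W)
                  ≤ (n : ℝ) * (ε * W) := mul_le_mul_of_nonneg_right hcard h0
                _ ≤ (n : ℝ) * (W / (4 * n)) := mul_le_mul_of_nonneg_left hεW (by positivity)
                _ = W / 4 := by field_simp
            linarith
          linarith
        linarith
      -- key claim: for each i in G there is α in A capturing at least w i / 2
      have key : ∀ i ∈ G, ∃ α ∈ A, s i + α * r i ≤ w i ∧ w i / 2 ≤ s i + α * r i := by
        intro i hiG
        have hiG' : s i + ε * r i ≤ w i := (Finset.mem_filter.1 hiG).2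
        set T : Finset ℤ := (Finset.Icc (-(L:ℤ)) (K:ℤ)).filter
          (fun m => s i + (2:ℝ) ^ m * r i ≤ w i) with hTdef
        have hTne : T.Nonempty := by
          refine ⟨-(L:ℤ), ?_⟩
          rw [hTdef, Finset.mem_filter, Finset.mem_Icc]
          exact ⟨⟨le_refl _, by omega⟩, hiG'⟩
        set m : ℤ := T.max' hTne with hmdef
        have hmT : m ∈ T := Finset.max'_mem T hTne
        have hmIcc : -(L:ℤ) ≤ m ∧ m ≤ (K:ℤ) := by
          have := (Finset.mem_filter.1 hmT).1
          exact Finset.mem_Icc.1 this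
        have hmcond : s i + (2:ℝ) ^ m * r i ≤ w i := (Finset.mem_filter.1 hmT).2
        have hnot : w i < s i + (2:ℝ) ^ (m + 1) * r i := by
          by_cases hmK : m + 1 ≤ (K:ℤ)
          · by_contra hcon
            push_neg at hcon
            have hmem : m + 1 ∈ T := by
              rw [hTdef, Finset.mem_filter, Finset.mem_Icc]
              exact ⟨⟨by omega, hmK⟩, hcon⟩
            have := Finset.le_max' T (m + 1) hmem
            omega
          · have hmK' : m = (K:ℤ) := by omega
            have : (2:ℝ) ^ (m + 1) = (2:ℝ) ^ (K + 1) := by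
              rw [hmK']
              rw [show ((K:ℤ) + 1) = ((K + 1 : ℕ) : ℤ) by push_cast; ring, zpow_natCast]
            rw [this]
            exact hdom i
        have hdouble : (2:ℝ) ^ (m + 1) = 2 * (2:ℝ) ^ m := by
          rw [zpow_add_one₀ (two_ne_zero) m]; ring
        have hhalf : w i / 2 ≤ s i + (2:ℝ) ^ m * r i := by
          rw [hdouble] at hnot
          have := hs0 i
          nlinarith
        refine ⟨(2:ℝ) ^ m, ?_, hmcond, hhalf⟩
        rw [hA]
        rcases le_or_gt 0 m with h0 | h0
        · refine Finset.mem_insert_of_mem (Finset.mem_union_right _ ?_)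
          refine Finset.mem_image.2 ⟨m.toNat, ?_, ?_⟩
          · rw [Finset.mem_range]; omega
          · rw [← zpow_natCast (2:ℝ) m.toNat, Int.toNat_of_nonneg h0]
        · refine Finset.mem_insert_of_mem (Finset.mem_union_left _ ?_)
          refine Finset.mem_image.2 ⟨(-m).toNat, ?_, ?_⟩
          · rw [Finset.mem_Icc]; omega
          · rw [inv_pow, ← zpow_natCast (2:ℝ) (-m).toNat, Int.toNat_of_nonneg (by omega), zpow_neg]
            exact inv_inv _
      -- aggregate
      have hbig : W / 4 ≤ ∑ α ∈ A, REV α := by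
        have h1 : ∑ i ∈ G, w i / 2 ≤
            ∑ i ∈ G, ∑ α ∈ A, (if s i + α * r i ≤ w i then s i + α * r i else 0) := by
          refine Finset.sum_le_sum fun i hi => ?_
          obtain ⟨α, hαA, hcond, hge⟩ := key i hi
          calc w i / 2 ≤ (if s i + α * r i ≤ w i then s i + α * r i else 0) := by
                rw [if_pos hcond]; exact hge
            _ ≤ ∑ α ∈ A, (if s i + α * r i ≤ w i then s i + α * r i else 0) :=
              Finset.single_le_sum (fun β hβ => hterm_nonneg i β (hA_nonneg β hβ)) hαA
        have h2 : ∑ i ∈ G, ∑ α ∈ A, (if s i + α * r i ≤ w i then s i + α * r i else 0) ≤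
            ∑ i, ∑ α ∈ A, (if s i + α * r i ≤ w i then s i + α * r i else 0) := by
          refine Finset.sum_le_sum_of_subset_of_nonneg (Finset.subset_univ _) fun i _ _ => ?_
          exact Finset.sum_nonneg fun β hβ => hterm_nonneg i β (hA_nonneg β hβ)
        have h3 : ∑ i, ∑ α ∈ A, (if s i + α * r i ≤ w i then s i + α * r i else 0)
            = ∑ α ∈ A, REV α := by
          rw [Finset.sum_comm]
          exact Finset.sum_congr rfl fun α _ => (hREV α).symm
        have h4 : ∑ i ∈ G, w i / 2 = (∑ i ∈ G, w i) / 2 := by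
          rw [Finset.sum_div]
        rw [h3] at h2
        rw [h4] at h1
        linarith
      have hfin : min (W / (8 * ((K : ℝ) + L + 1))) ((2:ℝ) ^ K * S) ≤
          W / (8 * ((K : ℝ) + L + 1)) := min_le_left _ _
      have h5 : W / (8 * ((K : ℝ) + L + 1)) ≤
          (1 / (2 * ((K : ℝ) + L + 1))) * ∑ α ∈ A, REV α := by
        have : W / (8 * ((K : ℝ) + L + 1)) = (1 / (2 * ((K : ℝ) + L + 1))) * (W / 4) := by
          field_simp
          norm_num
        rw [this]
        exact mul_le_mul_of_nonneg_left hbig (by positivity)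
      have h6 : 0 ≤ (1 / 2) * REV (2 ^ (K + 1)) := by linarith
      linarith
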